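/- arXiv:1707.07809 — 4 statements merged into one kernel-verified Lean document; each statement's English description precedes it below -/
import Mathlib

section
/- Let σ₁,…,σ_d ∈ S_n and σ'₁,…,σ'_d ∈ S_m. Then the d-tuple (σ₁,…,σ_d) contains the d-tuple (σ'₁,…,σ'_d) in parallel if and only if the set partition [σ₁,…,σ_d] of [(d+1)n] contains the set partition [σ'₁,…,σ'_d] of [(d+1)m] in the Klazar sense. -/
open Finset

/-- Two elements lie in the same block of the set partition `π`. -/
def SameBlock {n : ℕ} (π : Finpartition (univ : Finset (Fin n))) (a b : Fin n) : Prop :=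
  ∃ B ∈ π.parts, a ∈ B ∧ b ∈ B

/-- Klazar containment: `π` contains `ρ` if some order-preserving injection
realizes `ρ` as the restriction of `π`. -/
def KContains {n k : ℕ} (π : Finpartition (univ : Finset (Fin n)))
    (ρ : Finpartition (univ : Finset (Fin k))) : Prop :=
  ∃ f : Fin k ↪o Fin n, ∀ a b : Fin k, SameBlock ρ a b ↔ SameBlock π (f a) (f b)

/-- The block `T i = {i, n + σ₁ i, …, d*n + σ_d i}` (0-indexed) of the
correspondent partition `[σ₁,…,σ_d]`. -/
def corrBlock {n d : ℕ} (σ : Fin d → Equiv.Perm (Fin n)) (i : Fin n) :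
    Finset (Fin ((d + 1) * n)) :=
  insert ⟨(i : ℕ), by nlinarith [i.2]⟩
    ((univ : Finset (Fin d)).image fun (j : Fin d) =>
      (⟨((j : ℕ) + 1) * n + ((σ j i : Fin n) : ℕ), by nlinarith [j.2, (σ j i).2]⟩ :
        Fin ((d + 1) * n)))

/-- `π` is the set partition correspondent to the tuple of permutations `σ`. -/
def IsCorrespondent {n d : ℕ} (σ : Fin d → Equiv.Perm (Fin n))
    (π : Finpartition (univ : Finset (Fin ((d + 1) * n)))) : Prop :=
  π.parts = (univ : Finset (Fin n)).image (corrBlock σ)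

/-- The permutability of `π` is at most `d`. -/
def HasPermLE {k : ℕ} (d : ℕ) (π : Finpartition (univ : Finset (Fin k))) : Prop :=
  ∃ (m : ℕ) (σ : Fin d → Equiv.Perm (Fin m))
    (ρ : Finpartition (univ : Finset (Fin ((d + 1) * m)))),
    IsCorrespondent σ ρ ∧ KContains ρ π

/-- `π` has permutability exactly `d`. -/
def Permutability {k : ℕ} (π : Finpartition (univ : Finset (Fin k))) (d : ℕ) : Prop :=
  HasPermLE d π ∧ ∀ e < d, ¬ HasPermLE e π

/-- `BAvoid n π` is `B_n(π)`, the number of set partitions of `[n]` avoiding `π`. -/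
noncomputable def BAvoid {k : ℕ} (n : ℕ) (π : Finpartition (univ : Finset (Fin k))) : ℕ :=
  Nat.card {ρ : Finpartition (univ : Finset (Fin n)) // ¬ KContains ρ π}

/-- `B'_n(π)`: the number of set partitions of `[n]` with no singleton blocks avoiding `π`. -/
noncomputable def BAvoidNS {k : ℕ} (n : ℕ) (π : Finpartition (univ : Finset (Fin k))) : ℕ :=
  Nat.card {ρ : Finpartition (univ : Finset (Fin n)) //
    ¬ KContains ρ π ∧ ∀ B ∈ ρ.parts, 2 ≤ B.card}

/-- Parallel containment of tuples of permutations. -/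
def ParallelContains {n m d : ℕ} (σ : Fin d → Equiv.Perm (Fin n))
    (σ' : Fin d → Equiv.Perm (Fin m)) : Prop :=
  ∃ c : Fin m ↪o Fin n, ∀ (i : Fin d) (a b : Fin m),
    σ' i a < σ' i b ↔ σ i (c a) < σ i (c b)

section Helpers
variable {n d : ℕ}
variable {n d : ℕ}
def ptv (σ : Fin d → Equiv.Perm (Fin n)) (i : Fin n) : Fin (d + 1) → Fin n :=
  Fin.cases i (fun j => σ j i)
@[simp] lemma ptv_zero (σ : Fin d → Equiv.Perm (Fin n)) (i : Fin n) : ptv σ i 0 = i := rfl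
@[simp] lemma ptv_succ (σ : Fin d → Equiv.Perm (Fin n)) (i : Fin n) (j : Fin d) :
    ptv σ i j.succ = σ j i := by simp [ptv]
def blkElt (σ : Fin d → Equiv.Perm (Fin n)) (i : Fin n) (q : Fin (d + 1)) :
    Fin ((d + 1) * n) :=
  ⟨(q : ℕ) * n + (ptv σ i q : ℕ), by
    have h1 := (ptv σ i q).2
    have h2 : (q : ℕ) ≤ d := Nat.lt_succ_iff.mp q.2
    calc (q : ℕ) * n + (ptv σ i q : ℕ) < (q : ℕ) * n + n := by omega
      _ = ((q : ℕ) + 1) * n := by ring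
      _ ≤ (d + 1) * n := Nat.mul_le_mul_right n (by omega)⟩
lemma seg_lt {n q q' x x' : ℕ} (hx : x < n) (hx' : x' < n) :
    q * n + x < q' * n + x' ↔ q < q' ∨ (q = q' ∧ x < x') := by
  constructor
  · intro h
    rcases lt_trichotomy q q' with h1 | h1 | h1
    · exact Or.inl h1
    · subst h1; exact Or.inr ⟨rfl, lt_of_add_lt_add_left h⟩
    · exfalso
      have h2 : (q' + 1) * n ≤ q * n := Nat.mul_le_mul_right n (by omega)
      nlinarith
  · rintro (h1 | ⟨rfl, h2⟩)
    · have h2 : (q + 1) * n ≤ q' * n := Nat.mul_le_mul_right n (by omega)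
      nlinarith
    · exact Nat.add_lt_add_left h2 _
lemma seg_eq {n q q' x x' : ℕ} (hx : x < n) (hx' : x' < n) (h : q * n + x = q' * n + x') :
    q = q' ∧ x = x' := by
  rcases lt_trichotomy q q' with h1 | h1 | h1
  · exact absurd h (ne_of_lt ((seg_lt hx hx').mpr (Or.inl h1)))
  · subst h1; exact ⟨rfl, Nat.add_left_cancel h⟩
  · exact absurd h.symm (ne_of_lt ((seg_lt hx' hx).mpr (Or.inl h1)))
lemma blkElt_lt_iff {σ : Fin d → Equiv.Perm (Fin n)} {i i' : Fin n} {q q' : Fin (d + 1)} :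
    blkElt σ i q < blkElt σ i' q' ↔ q < q' ∨ (q = q' ∧ ptv σ i q < ptv σ i' q') := by
  rw [Fin.lt_def]
  show (q : ℕ) * n + (ptv σ i q : ℕ) < (q' : ℕ) * n + (ptv σ i' q' : ℕ) ↔ _
  rw [seg_lt (ptv σ i q).2 (ptv σ i' q').2]
  rw [Fin.lt_def (a := q) (b := q'), Fin.lt_def (a := ptv σ i q) (b := ptv σ i' q'),
    Fin.ext_iff (a := q) (b := q')]
lemma blkElt_inj {σ : Fin d → Equiv.Perm (Fin n)} {i i' : Fin n} {q q' : Fin (d + 1)}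
    (h : blkElt σ i q = blkElt σ i' q') : q = q' ∧ i = i' := by
  have hval : (q : ℕ) * n + (ptv σ i q : ℕ) = (q' : ℕ) * n + (ptv σ i' q' : ℕ) :=
    Fin.ext_iff.mp h
  have h2 := seg_eq (ptv σ i q).2 (ptv σ i' q').2 hval
  have hq : q = q' := Fin.ext h2.1
  subst hq
  refine ⟨rfl, ?_⟩
  have hx : ptv σ i q = ptv σ i' q := Fin.ext h2.2
  induction q using Fin.cases with
  | zero => simpa using hx
  | succ j => exact (σ j).injective (by simpa using hx)
lemma corrBlock_eq (σ : Fin d → Equiv.Perm (Fin n)) (i : Fin n) :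
    corrBlock σ i = univ.image (blkElt σ i) := by
  ext x
  simp only [corrBlock, mem_insert, mem_image, mem_univ, true_and]
  constructor
  · rintro (rfl | ⟨j, -, rfl⟩)
    · exact ⟨0, by simp [blkElt, Fin.ext_iff]⟩
    · exact ⟨j.succ, by simp [blkElt, Fin.ext_iff]⟩
  · rintro ⟨q, rfl⟩
    induction q using Fin.cases with
    | zero => left; simp [blkElt, Fin.ext_iff]
    | succ j => right; exact ⟨j, by simp [blkElt, Fin.ext_iff]⟩

lemma mem_corrBlock {σ : Fin d → Equiv.Perm (Fin n)} {i : Fin n} {x : Fin ((d + 1) * n)} :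
    x ∈ corrBlock σ i ↔ ∃ q, blkElt σ i q = x := by
  rw [corrBlock_eq]; simp

lemma sameBlock_corr {σ : Fin d → Equiv.Perm (Fin n)}
    {π : Finpartition (univ : Finset (Fin ((d + 1) * n)))} (hπ : IsCorrespondent σ π)
    (x y : Fin ((d + 1) * n)) :
    SameBlock π x y ↔ ∃ i q q', blkElt σ i q = x ∧ blkElt σ i q' = y := by
  unfold IsCorrespondent at hπ
  simp only [SameBlock, hπ, mem_image, mem_univ, true_and]
  constructor
  · rintro ⟨B, ⟨i, rfl⟩, hx, hy⟩
    obtain ⟨q, hq⟩ := mem_corrBlock.mp hx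
    obtain ⟨q', hq'⟩ := mem_corrBlock.mp hy
    exact ⟨i, q, q', hq, hq'⟩
  · rintro ⟨i, q, q', rfl, rfl⟩
    exact ⟨corrBlock σ i, ⟨i, rfl⟩, mem_corrBlock.mpr ⟨q, rfl⟩, mem_corrBlock.mpr ⟨q', rfl⟩⟩

lemma ptv_surj (σ : Fin d → Equiv.Perm (Fin n)) (q : Fin (d + 1)) (r : Fin n) :
    ∃ i, ptv σ i q = r := by
  induction q using Fin.cases with
  | zero => exact ⟨r, rfl⟩
  | succ j => exact ⟨(σ j)⁻¹ r, by simp⟩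

lemma exists_rep (σ : Fin d → Equiv.Perm (Fin n)) (x : Fin ((d + 1) * n)) :
    ∃ i q, blkElt σ i q = x := by
  have hn : 0 < n := by
    rcases Nat.eq_zero_or_pos n with h | h
    · exact absurd x.2 (by simp [h])
    · exact h
  have hq : (x : ℕ) / n < d + 1 := (Nat.div_lt_iff_lt_mul hn).mpr x.2
  obtain ⟨i, hi⟩ := ptv_surj σ ⟨(x : ℕ) / n, hq⟩ ⟨(x : ℕ) % n, Nat.mod_lt _ hn⟩
  refine ⟨i, ⟨(x : ℕ) / n, hq⟩, Fin.ext ?_⟩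
  show ((⟨(x : ℕ) / n, hq⟩ : Fin (d + 1)) : ℕ) * n + (ptv σ i _ : ℕ) = (x : ℕ)
  rw [hi]
  simpa [mul_comm] using Nat.div_add_mod (x : ℕ) n

lemma fin_sm_le {k : ℕ} {R : Fin k → Fin k} (hR : StrictMono R) (q : Fin k) :
    (q : ℕ) ≤ (R q : ℕ) := by
  have key : ∀ v : ℕ, ∀ q : Fin k, (q : ℕ) = v → v ≤ (R q : ℕ) := by
    intro v
    induction v with
    | zero => intro q _; exact Nat.zero_le _
    | succ w ih =>
      intro q hq
      have hw : w < k := by omega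
      have h1 : R ⟨w, hw⟩ < R q := hR (by rw [Fin.lt_def]; show w < (q : ℕ); omega)
      have h2 := ih ⟨w, hw⟩ rfl
      have h3 := Fin.lt_def.mp h1
      omega
  exact key (q : ℕ) q rfl

lemma fin_sm_id {k : ℕ} {Q : Fin k → Fin k} (h : StrictMono Q) (q : Fin k) : Q q = q := by
  have hbij : Function.Bijective Q := Finite.injective_iff_bijective.mp h.injective
  set E := Equiv.ofBijective Q hbij with hE
  have hEq : ∀ z, E z = Q z := fun z => rfl
  have hR : StrictMono E.symm := by
    intro x y hxy
    rcases lt_trichotomy (E.symm x) (E.symm y) with h1 | h1 | h1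
    · exact h1
    · exact absurd (by rw [← E.apply_symm_apply x, ← E.apply_symm_apply y, h1]) hxy.ne
    · exfalso
      have h2 : Q (E.symm y) < Q (E.symm x) := h h1
      rw [← hEq, ← hEq, E.apply_symm_apply, E.apply_symm_apply] at h2
      exact absurd hxy (not_lt_of_gt h2)
  have h1 := fin_sm_le h q
  have h2 := fin_sm_le hR (E q)
  rw [E.symm_apply_apply] at h2
  have h4 : (E q : ℕ) = (Q q : ℕ) := rfl
  apply Fin.ext; omega
end Helpers

section Main
variable {n m d : ℕ}

lemma ptv_map_lt {σ : Fin d → Equiv.Perm (Fin n)} {σ' : Fin d → Equiv.Perm (Fin m)}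
    (c : Fin m ↪o Fin n) (hc : ∀ (j : Fin d) (a b : Fin m),
      σ' j a < σ' j b ↔ σ j (c a) < σ j (c b)) (i i' : Fin m) (q : Fin (d + 1)) :
    ptv σ' i q < ptv σ' i' q ↔ ptv σ (c i) q < ptv σ (c i') q := by
  induction q using Fin.cases with
  | zero => exact c.lt_iff_lt.symm
  | succ j => simpa using hc j i i'

lemma blk_map_lt {σ : Fin d → Equiv.Perm (Fin n)} {σ' : Fin d → Equiv.Perm (Fin m)}
    (c : Fin m ↪o Fin n) (hc : ∀ (j : Fin d) (a b : Fin m),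
      σ' j a < σ' j b ↔ σ j (c a) < σ j (c b)) (i i' : Fin m) (q q' : Fin (d + 1)) :
    blkElt σ' i q < blkElt σ' i' q' ↔ blkElt σ (c i) q < blkElt σ (c i') q' := by
  rw [blkElt_lt_iff, blkElt_lt_iff]
  constructor
  · rintro (h | ⟨rfl, h⟩)
    · exact Or.inl h
    · exact Or.inr ⟨rfl, (ptv_map_lt c hc i i' q).mp h⟩
  · rintro (h | ⟨rfl, h⟩)
    · exact Or.inl h
    · exact Or.inr ⟨rfl, (ptv_map_lt c hc i i' q).mpr h⟩

end Main

/-- parallel containment of tuples of permutations is equivalent to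
Klazar containment of the correspondent set partitions. -/
theorem stmt2 (n m d : ℕ) (σ : Fin d → Equiv.Perm (Fin n)) (σ' : Fin d → Equiv.Perm (Fin m))
    (π : Finpartition (univ : Finset (Fin ((d + 1) * n))))
    (π' : Finpartition (univ : Finset (Fin ((d + 1) * m))))
    (hπ : IsCorrespondent σ π) (hπ' : IsCorrespondent σ' π') :
    ParallelContains σ σ' ↔ KContains π π' := by
  constructor
  · rintro ⟨c, hc⟩
    choose ri rq hre using exists_rep σ'
    set F : Fin ((d + 1) * m) → Fin ((d + 1) * n) :=
      fun x => blkElt σ (c (ri x)) (rq x) with hF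
    have hFmono : StrictMono F := by
      intro x y hxy
      exact (blk_map_lt c hc (ri x) (ri y) (rq x) (rq y)).mp
        (by rw [hre x, hre y]; exact hxy)
    refine ⟨OrderEmbedding.ofStrictMono F hFmono, ?_⟩
    intro a b
    rw [sameBlock_corr hπ', sameBlock_corr hπ]
    constructor
    · rintro ⟨i, q, q', h1, h2⟩
      have e1 : ri a = i := (blkElt_inj ((hre a).trans h1.symm)).2
      have e2 : ri b = i := (blkElt_inj ((hre b).trans h2.symm)).2
      exact ⟨c i, rq a, rq b, by rw [← e1]; rfl, by rw [← e2]; rfl⟩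
    · rintro ⟨i, q, q', h1, h2⟩
      have ha : (OrderEmbedding.ofStrictMono F hFmono) a = blkElt σ (c (ri a)) (rq a) := rfl
      have hb : (OrderEmbedding.ofStrictMono F hFmono) b = blkElt σ (c (ri b)) (rq b) := rfl
      rw [ha] at h1
      rw [hb] at h2
      have e1 : i = c (ri a) := (blkElt_inj h1).2
      have e2 : i = c (ri b) := (blkElt_inj h2).2
      have e3 : ri a = ri b := c.injective (e1.symm.trans e2)
      exact ⟨ri a, rq a, rq b, hre a, by rw [e3]; exact hre b⟩
  · rintro ⟨f, hf⟩
    have claim : ∀ a : Fin m, ∃ i' : Fin n, ∀ q, f (blkElt σ' a q) = blkElt σ i' q := by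
      intro a
      have hsb : ∀ q : Fin (d + 1),
          SameBlock π (f (blkElt σ' a 0)) (f (blkElt σ' a q)) := fun q =>
        (hf _ _).mp ((sameBlock_corr hπ' _ _).mpr ⟨a, 0, q, rfl, rfl⟩)
      obtain ⟨i', q0, q0', h0, h0'⟩ := (sameBlock_corr hπ _ _).mp (hsb 0)
      have hQ : ∀ q, ∃ q₂, blkElt σ i' q₂ = f (blkElt σ' a q) := by
        intro q
        obtain ⟨i₂, p1, p2, hp1, hp2⟩ := (sameBlock_corr hπ _ _).mp (hsb q)
        have e : i₂ = i' := (blkElt_inj (hp1.trans h0.symm)).2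
        exact ⟨p2, by rw [← e]; exact hp2⟩
      choose Q hQe using hQ
      have hQmono : StrictMono Q := by
        intro p q hpq
        have h1 : blkElt σ' a p < blkElt σ' a q := blkElt_lt_iff.mpr (Or.inl hpq)
        have h2 := f.strictMono h1
        rw [← hQe p, ← hQe q] at h2
        rcases blkElt_lt_iff.mp h2 with h | ⟨he, h⟩
        · exact h
        · rw [he] at h; exact absurd h (lt_irrefl _)
      refine ⟨i', fun q => by rw [← hQe q, fin_sm_id hQmono q]⟩
    choose c0 hc0 using claim
    have hc0mono : StrictMono c0 := by
      intro a b hab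
      have h1 : blkElt σ' a 0 < blkElt σ' b 0 :=
        blkElt_lt_iff.mpr (Or.inr ⟨rfl, by simpa using hab⟩)
      have h2 := f.strictMono h1
      rw [hc0 a 0, hc0 b 0] at h2
      rcases blkElt_lt_iff.mp h2 with h | ⟨-, h⟩
      · exact absurd h (lt_irrefl _)
      · simpa using h
    refine ⟨OrderEmbedding.ofStrictMono c0 hc0mono, ?_⟩
    intro j a b
    have e1 : σ' j a < σ' j b ↔ blkElt σ' a j.succ < blkElt σ' b j.succ := by
      rw [blkElt_lt_iff]
      constructor
      · intro h; exact Or.inr ⟨rfl, by simpa using h⟩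
      · rintro (h | ⟨-, h⟩)
        · exact absurd h (lt_irrefl _)
        · simpa using h
    have e2 : blkElt σ' a j.succ < blkElt σ' b j.succ ↔
        blkElt σ (c0 a) j.succ < blkElt σ (c0 b) j.succ := by
      rw [← hc0 a j.succ, ← hc0 b j.succ]
      exact f.lt_iff_lt.symm
    have e3 : blkElt σ (c0 a) j.succ < blkElt σ (c0 b) j.succ ↔
        σ j (c0 a) < σ j (c0 b) := by
      rw [blkElt_lt_iff]
      constructor
      · rintro (h | ⟨-, h⟩)
        · exact absurd h (lt_irrefl _)
        · simpa using h
      · intro h; exact Or.inr ⟨rfl, by simpa using h⟩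
    exact e1.trans (e2.trans e3)
end

section
/- For any set partition π of [k] with all blocks of size at least 2, if π' is a set partition of [n−i] avoiding π with no singleton blocks, then any partition of [n] obtained from π' by inserting i singleton blocks (at any choice of i positions among [n]) also avoids π. Hence B_n(π) ≥ C(n,i)·B'_{n−i}(π), where B'_m(π) is the number of partitions of [m] with no singleton blocks avoiding π. -/
open Finset

lemma sameBlock_iff_mem_part {n : ℕ} (ρ : Finpartition (univ : Finset (Fin n))) (a b : Fin n) :
    SameBlock ρ a b ↔ b ∈ ρ.part a := by
  constructor
  · rintro ⟨B, hB, haB, hbB⟩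
    rwa [ρ.part_eq_of_mem hB haB]
  · intro hb
    exact ⟨ρ.part a, ρ.part_mem.2 (mem_univ a), ρ.mem_part (mem_univ a), hb⟩

lemma sameBlock_refl {n : ℕ} (ρ : Finpartition (univ : Finset (Fin n))) (a : Fin n) :
    SameBlock ρ a a :=
  ⟨ρ.part a, ρ.part_mem.2 (mem_univ a), ρ.mem_part (mem_univ a), ρ.mem_part (mem_univ a)⟩

lemma sameBlock_symm {n : ℕ} {ρ : Finpartition (univ : Finset (Fin n))} {a b : Fin n}
    (h : SameBlock ρ a b) : SameBlock ρ b a := by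
  obtain ⟨B, hB, h1, h2⟩ := h; exact ⟨B, hB, h2, h1⟩

lemma sameBlock_trans {n : ℕ} {ρ : Finpartition (univ : Finset (Fin n))} {a b c : Fin n}
    (h : SameBlock ρ a b) (h' : SameBlock ρ b c) : SameBlock ρ a c := by
  obtain ⟨B, hB, h1, h2⟩ := h; obtain ⟨C, hC, h3, h4⟩ := h'
  exact ⟨B, hB, h1, (ρ.eq_of_mem_parts hB hC h2 h3) ▸ h4⟩

lemma finpartition_eq_of_sameBlock {n : ℕ} {ρ₁ ρ₂ : Finpartition (univ : Finset (Fin n))}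
    (h : ∀ a b, SameBlock ρ₁ a b ↔ SameBlock ρ₂ a b) : ρ₁ = ρ₂ := by
  have hpart : ∀ a, ρ₁.part a = ρ₂.part a := by
    intro a; ext b
    rw [← sameBlock_iff_mem_part, ← sameBlock_iff_mem_part, h]
  ext B
  constructor
  · intro hB
    obtain ⟨a, ha⟩ := Finset.nonempty_iff_ne_empty.2 (ρ₁.ne_bot hB)
    rw [← ρ₁.part_eq_of_mem hB ha, hpart]
    exact ρ₂.part_mem.2 (mem_univ a)
  · intro hB
    obtain ⟨a, ha⟩ := Finset.nonempty_iff_ne_empty.2 (ρ₂.ne_bot hB)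
    rw [← ρ₂.part_eq_of_mem hB ha, ← hpart]
    exact ρ₁.part_mem.2 (mem_univ a)

def insRel {n m : ℕ} (f : Fin m ↪o Fin n) (π' : Finpartition (univ : Finset (Fin m)))
    (x y : Fin n) : Prop :=
  x = y ∨ ∃ a b, f a = x ∧ f b = y ∧ SameBlock π' a b

def insSetoid {n m : ℕ} (f : Fin m ↪o Fin n) (π' : Finpartition (univ : Finset (Fin m))) :
    Setoid (Fin n) := by
  refine ⟨insRel f π', ⟨fun x => Or.inl rfl, ?_, ?_⟩⟩
  · rintro x y (rfl | ⟨a, b, rfl, rfl, h⟩)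
    · exact Or.inl rfl
    · exact Or.inr ⟨b, a, rfl, rfl, sameBlock_symm h⟩
  · rintro x y z (rfl | ⟨a, b, rfl, rfl, h⟩) h2
    · exact h2
    · rcases h2 with rfl | ⟨a', b', ha', rfl, h'⟩
      · exact Or.inr ⟨a, b, rfl, rfl, h⟩
      · have : a' = b := f.injective ha'
        subst this
        exact Or.inr ⟨a, b', rfl, rfl, sameBlock_trans h h'⟩

noncomputable instance insSetoidDec {n m : ℕ} (f : Fin m ↪o Fin n)
    (π' : Finpartition (univ : Finset (Fin m))) : DecidableRel ⇑(insSetoid f π') :=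
  fun _ _ => Classical.dec _

noncomputable def insPart {n m : ℕ} (f : Fin m ↪o Fin n)
    (π' : Finpartition (univ : Finset (Fin m))) : Finpartition (univ : Finset (Fin n)) :=
  Finpartition.ofSetoid (insSetoid f π')

lemma insPart_sameBlock {n m : ℕ} (f : Fin m ↪o Fin n)
    (π' : Finpartition (univ : Finset (Fin m))) (x y : Fin n) :
    SameBlock (insPart f π') x y ↔ insRel f π' x y := by
  rw [sameBlock_iff_mem_part, insPart, Finpartition.mem_part_ofSetoid_iff_rel]
  rfl

lemma insPart_sameBlock_f {n m : ℕ} (f : Fin m ↪o Fin n)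
    (π' : Finpartition (univ : Finset (Fin m))) (a b : Fin m) :
    SameBlock (insPart f π') (f a) (f b) ↔ SameBlock π' a b := by
  rw [insPart_sameBlock]
  constructor
  · rintro (h | ⟨a', b', ha', hb', h⟩)
    · exact f.injective h ▸ sameBlock_refl π' b
    · exact f.injective ha' ▸ f.injective hb' ▸ h
  · intro h
    exact Or.inr ⟨a, b, rfl, rfl, h⟩

lemma insPart_singleton {n m : ℕ} (f : Fin m ↪o Fin n)
    (π' : Finpartition (univ : Finset (Fin m))) (x : Fin n) (hx : x ∉ Set.range f) :
    (insPart f π').part x = {x} := by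
  ext y
  rw [← sameBlock_iff_mem_part, insPart_sameBlock, mem_singleton]
  constructor
  · rintro (rfl | ⟨a, b, rfl, rfl, h⟩)
    · rfl
    · exact absurd ⟨a, rfl⟩ hx
  · rintro rfl; exact Or.inl rfl

lemma insPart_singleton_mem {n m : ℕ} (f : Fin m ↪o Fin n)
    (π' : Finpartition (univ : Finset (Fin m))) (x : Fin n) (hx : x ∉ Set.range f) :
    ({x} : Finset (Fin n)) ∈ (insPart f π').parts := by
  rw [← insPart_singleton f π' x hx]
  exact (insPart f π').part_mem.2 (mem_univ x)

lemma insPart_two_le {n m : ℕ} (f : Fin m ↪o Fin n)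
    (π' : Finpartition (univ : Finset (Fin m))) (hns : ∀ B ∈ π'.parts, 2 ≤ B.card)
    (a : Fin m) : 2 ≤ ((insPart f π').part (f a)).card := by
  have h2 : 1 < (π'.part a).card := hns _ (π'.part_mem.2 (mem_univ a))
  obtain ⟨b, hb, hba⟩ := Finset.exists_mem_ne h2 a
  show 1 < _
  rw [Finset.one_lt_card]
  refine ⟨f a, (insPart f π').mem_part (mem_univ _), f b, ?_, fun h => hba (f.injective h.symm)⟩
  rw [← sameBlock_iff_mem_part, insPart_sameBlock_f, sameBlock_iff_mem_part]
  exact hb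

lemma avoid_of_insert {k n m : ℕ} (π : Finpartition (univ : Finset (Fin k)))
    (hπ : ∀ B ∈ π.parts, 2 ≤ B.card)
    (π' : Finpartition (univ : Finset (Fin m))) (hav : ¬ KContains π' π)
    (ρ : Finpartition (univ : Finset (Fin n))) (f : Fin m ↪o Fin n)
    (hsame : ∀ a b : Fin m, SameBlock ρ (f a) (f b) ↔ SameBlock π' a b)
    (hsing : ∀ x : Fin n, x ∉ Set.range f → ({x} : Finset (Fin n)) ∈ ρ.parts) :
    ¬ KContains ρ π := by
  rintro ⟨g, hg⟩
  have hrange : ∀ a : Fin k, ∃ a', f a' = g a := by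
    intro a
    by_contra h
    push_neg at h
    have hs : ({g a} : Finset (Fin n)) ∈ ρ.parts :=
      hsing _ (by rintro ⟨a', ha'⟩; exact h a' ha')
    have h2 : 1 < (π.part a).card := hπ _ (π.part_mem.2 (mem_univ a))
    obtain ⟨b, hb, hba⟩ := Finset.exists_mem_ne h2 a
    have hsb : SameBlock ρ (g a) (g b) :=
      (hg a b).mp (by rw [sameBlock_iff_mem_part]; exact hb)
    obtain ⟨C, hC, h1c, h2c⟩ := hsb
    have hCs : C = {g a} := ρ.eq_of_mem_parts hC hs h1c (mem_singleton_self _)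
    rw [hCs, mem_singleton] at h2c
    exact hba (g.injective h2c)
  choose h hf using hrange
  have hmono : StrictMono h := by
    intro a b hab
    have := g.strictMono hab
    rw [← hf a, ← hf b] at this
    exact f.strictMono.lt_iff_lt.mp this
  refine hav ⟨OrderEmbedding.ofStrictMono h hmono, fun a b => ?_⟩
  show SameBlock π a b ↔ SameBlock π' (h a) (h b)
  rw [hg a b, ← hf a, ← hf b, hsame]

lemma insert_injective {n m : ℕ} {π₁ π₂ : Finpartition (univ : Finset (Fin m))}
    (h₁ : ∀ B ∈ π₁.parts, 2 ≤ B.card) (h₂ : ∀ B ∈ π₂.parts, 2 ≤ B.card)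
    {s₁ s₂ : Finset (Fin n)} (hs₁ : s₁.card = m) (hs₂ : s₂.card = m)
    (heq : insPart (s₁.orderEmbOfFin hs₁) π₁ = insPart (s₂.orderEmbOfFin hs₂) π₂) :
    s₁ = s₂ ∧ HEq π₁ π₂ := by
  have key : ∀ (s : Finset (Fin n)) (hs : s.card = m)
      (πp : Finpartition (univ : Finset (Fin m))), (∀ B ∈ πp.parts, 2 ≤ B.card) →
      ∀ x : Fin n, x ∈ s ↔ 2 ≤ ((insPart (s.orderEmbOfFin hs) πp).part x).card := by
    intro s hs πp hns x
    constructor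
    · intro hx
      have : x ∈ Set.range (s.orderEmbOfFin hs) := by
        rw [Finset.range_orderEmbOfFin]; exact hx
      obtain ⟨a, rfl⟩ := this
      exact insPart_two_le _ _ hns a
    · intro hx
      by_contra hxs
      have hxr : x ∉ Set.range (s.orderEmbOfFin hs) := by
        rw [Finset.range_orderEmbOfFin]; exact hxs
      rw [insPart_singleton _ _ _ hxr, Finset.card_singleton] at hx
      omega
  have hss : s₁ = s₂ := by
    ext x
    rw [key s₁ hs₁ π₁ h₁ x, key s₂ hs₂ π₂ h₂ x, heq]
  subst hss
  refine ⟨rfl, heq_of_eq ?_⟩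
  apply finpartition_eq_of_sameBlock
  intro a b
  rw [← insPart_sameBlock_f (s₁.orderEmbOfFin hs₁) π₁ a b, heq,
    insPart_sameBlock_f]

/-- if `π` has all blocks of size at least 2, inserting `i` singleton
blocks into a `π`-avoiding singleton-free partition of `[n-i]` yields a `π`-avoiding
partition of `[n]`; hence `B_n(π) ≥ C(n,i) · B'_{n-i}(π)`. -/
theorem stmt7 (k n i : ℕ) (hi : i ≤ n) (π : Finpartition (univ : Finset (Fin k)))
    (hπ : ∀ B ∈ π.parts, 2 ≤ B.card) :
    (∀ π' : Finpartition (univ : Finset (Fin (n - i))), ¬ KContains π' π →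
      (∀ B ∈ π'.parts, 2 ≤ B.card) →
      ∀ (ρ : Finpartition (univ : Finset (Fin n))) (f : Fin (n - i) ↪o Fin n),
        (∀ a b : Fin (n - i), SameBlock ρ (f a) (f b) ↔ SameBlock π' a b) →
        (∀ x : Fin n, x ∉ Set.range f → ({x} : Finset (Fin n)) ∈ ρ.parts) →
        ¬ KContains ρ π) ∧
    Nat.choose n i * BAvoidNS (n - i) π ≤ BAvoid n π := by
  classical
  constructor
  · intro π' h1 h2 ρ f h3 h4
    exact avoid_of_insert π hπ π' h1 ρ f h3 h4
  · haveI : Finite (Finpartition (univ : Finset (Fin n))) :=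
      Finite.of_injective (fun P => P.parts) fun P Q h => Finpartition.ext h
    let S := {s : Finset (Fin n) // s.card = n - i}
    let T := {π' : Finpartition (univ : Finset (Fin (n - i))) //
      ¬ KContains π' π ∧ ∀ B ∈ π'.parts, 2 ≤ B.card}
    let Φ : S × T → {ρ : Finpartition (univ : Finset (Fin n)) // ¬ KContains ρ π} :=
      fun p => ⟨insPart (p.1.1.orderEmbOfFin p.1.2) p.2.1,
        avoid_of_insert π hπ p.2.1 p.2.2.1 _ _
          (insPart_sameBlock_f _ _) (fun x hx => insPart_singleton_mem _ _ x hx)⟩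
    have hΦ : Function.Injective Φ := by
      rintro ⟨⟨s₁, hs₁⟩, ⟨π₁, hπ₁⟩⟩ ⟨⟨s₂, hs₂⟩, ⟨π₂, hπ₂⟩⟩ h
      have h' := Subtype.ext_iff.mp h
      obtain ⟨hss, hpp⟩ := insert_injective hπ₁.2 hπ₂.2 hs₁ hs₂ h'
      subst hss
      have hpe : π₁ = π₂ := eq_of_heq hpp
      subst hpe
      rfl
    have hle := Nat.card_le_card_of_injective Φ hΦ
    rw [Nat.card_prod] at hle
    have hS : Nat.card S = n.choose i := by
      rw [Nat.card_eq_fintype_card, Fintype.card_finset_len, Fintype.card_fin,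
        Nat.choose_symm hi]
    have hT : Nat.card T = BAvoidNS (n - i) π := rfl
    have hB : Nat.card {ρ : Finpartition (univ : Finset (Fin n)) // ¬ KContains ρ π}
        = BAvoid n π := rfl
    rw [hS, hT, hB] at hle
    exact hle
end

section
/- Let π be a set partition of permutability d ≥ 2 with no singleton blocks, and let n = dm. For every (d−1)-tuple of permutations σ₁,…,σ_{d−1} ∈ S_m, the partition [σ₁,…,σ_{d−1}] of [n] avoids π, and distinct tuples give distinct partitions. Hence the number of partitions of [n] avoiding π with no singleton blocks is at least (m!)^{d−1} = ((n/d)!)^{d−1}. -/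
open Finset

section Aux

variable {n d : ℕ}

lemma npos (x : Fin ((d + 1) * n)) : 0 < n := by
  rcases Nat.eq_zero_or_pos n with h | h
  · exact absurd x.2 (by simp [h])
  · exact h

def idxFun (σ : Fin d → Equiv.Perm (Fin n)) (x : Fin ((d + 1) * n)) : Fin n :=
  if h : (x : ℕ) < n then ⟨x, h⟩
  else
    (σ ⟨(x : ℕ) / n - 1, by
        have hn := npos x
        have h1 : (x : ℕ) / n < d + 1 := (Nat.div_lt_iff_lt_mul hn).2 x.2
        have h2 : 1 ≤ (x : ℕ) / n := (Nat.one_le_div_iff hn).2 (le_of_not_gt h)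
        omega⟩).symm ⟨(x : ℕ) % n, Nat.mod_lt _ (npos x)⟩

lemma idxFun_spec (σ : Fin d → Equiv.Perm (Fin n)) (j : Fin d) (r : Fin n)
    (h : ((j : ℕ) + 1) * n + (r : ℕ) < (d + 1) * n) :
    idxFun σ ⟨((j : ℕ) + 1) * n + (r : ℕ), h⟩ = (σ j).symm r := by
  have hn : 0 < n := lt_of_le_of_lt (Nat.zero_le _) r.2
  have hle : n ≤ ((j : ℕ) + 1) * n := Nat.le_mul_of_pos_left n (by omega)
  have hge : ¬ (((j : ℕ) + 1) * n + (r : ℕ) < n) := by omega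
  have hdiv : (((j : ℕ) + 1) * n + (r : ℕ)) / n = (j : ℕ) + 1 := by
    rw [mul_comm, Nat.mul_add_div hn, Nat.div_eq_of_lt r.2, add_zero]
  have hmod : (((j : ℕ) + 1) * n + (r : ℕ)) % n = (r : ℕ) := by
    rw [mul_comm, Nat.mul_add_mod]
    exact Nat.mod_eq_of_lt r.2
  rw [idxFun, dif_neg hge]
  simp only [hdiv, hmod, Nat.add_sub_cancel, Fin.eta]

lemma mem_corrBlock_iff (σ : Fin d → Equiv.Perm (Fin n)) (x : Fin ((d + 1) * n)) (i : Fin n) :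
    x ∈ corrBlock σ i ↔ idxFun σ x = i := by
  have hn := npos x
  constructor
  · intro hx
    rw [corrBlock, mem_insert, mem_image] at hx
    rcases hx with hx | ⟨j, -, hj⟩
    · rw [hx, idxFun, dif_pos i.2]
    · rw [← hj, idxFun_spec]
      exact Equiv.symm_apply_apply _ _
  · intro hx
    rw [corrBlock, mem_insert, mem_image]
    by_cases h : (x : ℕ) < n
    · left
      rw [idxFun, dif_pos h] at hx
      exact Fin.ext (by rw [← hx])
    · right
      rw [idxFun, dif_neg h] at hx
      have h1 : (x : ℕ) / n < d + 1 := (Nat.div_lt_iff_lt_mul hn).2 x.2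
      have h2 : 1 ≤ (x : ℕ) / n := (Nat.one_le_div_iff hn).2 (le_of_not_gt h)
      refine ⟨⟨(x : ℕ) / n - 1, by omega⟩, mem_univ _, ?_⟩
      have hσ : ((σ ⟨(x : ℕ) / n - 1, by omega⟩) i : ℕ) = (x : ℕ) % n := by
        rw [← hx, Equiv.apply_symm_apply]
      apply Fin.ext
      simp only [hσ]
      have hdm := Nat.div_add_mod (x : ℕ) n
      have hmm : ((x : ℕ) / n) * n = n * ((x : ℕ) / n) := Nat.mul_comm _ _
      have hstep : ((x : ℕ) / n - 1 + 1) * n = ((x : ℕ) / n) * n := by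
        congr 1; omega
      rw [hstep]
      omega

lemma corrBlock_nonempty (σ : Fin d → Equiv.Perm (Fin n)) (i : Fin n) :
    (corrBlock σ i).Nonempty :=
  ⟨_, mem_insert_self _ _⟩

def corrPartition (σ : Fin d → Equiv.Perm (Fin n)) :
    Finpartition (univ : Finset (Fin ((d + 1) * n))) :=
  Finpartition.ofErase (univ.image (corrBlock σ))
    (by
      rw [Finset.supIndep_iff_pairwiseDisjoint]
      intro B hB C hC hBC
      simp only [coe_image, Set.mem_image, mem_coe, mem_univ, coe_univ, Set.image_univ,
        Set.mem_range] at hB hC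
      obtain ⟨i, rfl⟩ := hB
      obtain ⟨i', rfl⟩ := hC
      rw [Function.onFun, Finset.disjoint_left]
      intro x hx hx'
      rw [id, mem_corrBlock_iff] at hx hx'
      exact hBC (by rw [← hx, ← hx']))
    (by
      refine le_antisymm (Finset.sup_le fun B _ => Finset.subset_univ B) fun x _ => ?_
      rw [Finset.mem_sup]
      exact ⟨corrBlock σ (idxFun σ x), mem_image_of_mem _ (mem_univ _),
        (mem_corrBlock_iff σ x _).2 rfl⟩)

lemma corrPartition_parts (σ : Fin d → Equiv.Perm (Fin n)) :
    (corrPartition σ).parts = univ.image (corrBlock σ) := by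
  show (univ.image (corrBlock σ)).erase ⊥ = univ.image (corrBlock σ)
  apply Finset.erase_eq_of_notMem
  rw [mem_image]
  rintro ⟨i, -, hi⟩
  exact absurd (hi ▸ corrBlock_nonempty σ i) (by simp)

lemma isCorr (σ : Fin d → Equiv.Perm (Fin n)) : IsCorrespondent σ (corrPartition σ) :=
  corrPartition_parts σ

lemma corrBlock_card (hd : 0 < d) (σ : Fin d → Equiv.Perm (Fin n)) (i : Fin n) :
    2 ≤ (corrBlock σ i).card := by
  rw [Nat.succ_le_iff, Finset.one_lt_card]
  have hn : 0 < n := lt_of_le_of_lt (Nat.zero_le _) i.2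
  refine ⟨⟨(i : ℕ), by nlinarith [i.2]⟩, mem_insert_self _ _,
    ⟨((⟨0, hd⟩ : Fin d) + 1) * n + ((σ ⟨0, hd⟩ i : Fin n) : ℕ), by nlinarith [(σ ⟨0, hd⟩ i).2]⟩,
    mem_insert_of_mem (mem_image_of_mem _ (mem_univ (⟨0, hd⟩ : Fin d))), ?_⟩
  intro hc
  have := congrArg Fin.val hc
  simp only at this
  have hle : n ≤ (((⟨0, hd⟩ : Fin d) : ℕ) + 1) * n := Nat.le_mul_of_pos_left n (by omega)
  omega

lemma isCorr_inj (σ σ' : Fin d → Equiv.Perm (Fin n))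
    (ρ : Finpartition (univ : Finset (Fin ((d + 1) * n))))
    (h : IsCorrespondent σ ρ) (h' : IsCorrespondent σ' ρ) : σ = σ' := by
  rcases Nat.eq_zero_or_pos n with hn | hn
  · subst hn
    funext j
    exact Equiv.ext fun x => x.elim0
  · funext j
    apply Equiv.ext
    intro i
    have hmem1 : corrBlock σ i ∈ ρ.parts := by
      rw [h]; exact mem_image_of_mem _ (mem_univ i)
    have hmem2 : corrBlock σ' i ∈ ρ.parts := by
      rw [h']; exact mem_image_of_mem _ (mem_univ i)
    have heq : corrBlock σ i = corrBlock σ' i :=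
      ρ.eq_of_mem_parts hmem1 hmem2 (mem_insert_self _ _) (mem_insert_self _ _)
    have hy : (⟨((j : ℕ) + 1) * n + ((σ j i : Fin n) : ℕ), by nlinarith [j.2, (σ j i).2]⟩ :
        Fin ((d + 1) * n)) ∈ corrBlock σ i := by
      rw [mem_corrBlock_iff, idxFun_spec]
      exact Equiv.symm_apply_apply _ _
    rw [heq, mem_corrBlock_iff, idxFun_spec] at hy
    exact (Equiv.symm_apply_eq _).1 hy

instance finpartitionFinite {N : ℕ} : Finite (Finpartition (univ : Finset (Fin N))) :=
  Finite.of_injective (fun P => P.parts) fun a b h => by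
    cases a; cases b; simpa using h

end Aux

/-- if `pm(π) = d ≥ 2` and `π` has no singleton blocks, every
correspondent partition `[σ₁,…,σ_{d-1}]` of `[dm]` avoids `π`, distinct tuples give
distinct partitions, and hence there are at least `(m!)^(d-1)` singleton-free
partitions of `[dm]` avoiding `π`. -/
theorem stmt8 (k d m : ℕ) (hd : 2 ≤ d) (π : Finpartition (univ : Finset (Fin k)))
    (hperm : Permutability π d) (hπ : ∀ B ∈ π.parts, 2 ≤ B.card) :
    (∀ (σ : Fin (d - 1) → Equiv.Perm (Fin m))
        (ρ : Finpartition (univ : Finset (Fin ((d - 1 + 1) * m)))),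
      IsCorrespondent σ ρ → ¬ KContains ρ π) ∧
    (∀ (σ σ' : Fin (d - 1) → Equiv.Perm (Fin m))
        (ρ ρ' : Finpartition (univ : Finset (Fin ((d - 1 + 1) * m)))),
      IsCorrespondent σ ρ → IsCorrespondent σ' ρ' → ρ = ρ' → σ = σ') ∧
    (Nat.factorial m) ^ (d - 1) ≤ BAvoidNS ((d - 1 + 1) * m) π := by
  have hd1 : 0 < d - 1 := by omega
  have part1 : ∀ (σ : Fin (d - 1) → Equiv.Perm (Fin m))
      (ρ : Finpartition (univ : Finset (Fin ((d - 1 + 1) * m)))),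
      IsCorrespondent σ ρ → ¬ KContains ρ π := by
    intro σ ρ hσ hcont
    exact hperm.2 (d - 1) (by omega) ⟨m, σ, ρ, hσ, hcont⟩
  refine ⟨part1, fun σ σ' ρ ρ' h h' hρρ => by subst hρρ; exact isCorr_inj σ σ' ρ h h', ?_⟩
  let F : (Fin (d - 1) → Equiv.Perm (Fin m)) →
      {ρ : Finpartition (univ : Finset (Fin ((d - 1 + 1) * m))) //
        ¬ KContains ρ π ∧ ∀ B ∈ ρ.parts, 2 ≤ B.card} :=
    fun σ => ⟨corrPartition σ, part1 σ _ (isCorr σ), fun B hB => by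
      rw [corrPartition_parts, mem_image] at hB
      obtain ⟨i, -, rfl⟩ := hB
      exact corrBlock_card hd1 σ i⟩
  have hF : Function.Injective F := by
    intro σ σ' h
    have hc : corrPartition σ = corrPartition σ' := congrArg Subtype.val h
    exact isCorr_inj σ σ' _ (isCorr σ) (by rw [hc]; exact isCorr σ')
  calc (Nat.factorial m) ^ (d - 1)
      = Nat.card (Fin (d - 1) → Equiv.Perm (Fin m)) := by
        simp [Nat.card_eq_fintype_card, Fintype.card_fun, Fintype.card_perm, Fintype.card_fin]
    _ ≤ BAvoidNS ((d - 1 + 1) * m) π := Nat.card_le_card_of_injective F hF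
end

section
/- Subject to nonnegative reals c₁,…,c_n with Σ_{i=1}^n i·c_i = n, the quantity Σ_{i=1}^n (c_i(ln n + 1) − c_i ln c_i) is O(n); more precisely it is at most n·ln a + n where a < (3+√5)/2, hence at most n·(1 + ln((3+√5)/2)). -/
open Finset

lemma geom_half_eq (n : ℕ) : ∑ i ∈ Finset.Icc 1 n, ((1:ℝ)/2)^i = 1 - (1/2)^n := by
  induction n with
  | zero => simp
  | succ n ih =>
    rw [Finset.sum_Icc_succ_top (by omega), ih, pow_succ]
    ring

/-- subject to `c_i ≥ 0` and `Σ i·c_i = n`, the quantity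
`Σ (c_i(ln n + 1) − c_i ln c_i)` is at most `n(1 + ln((3+√5)/2))`. -/
theorem stmt17 (n : ℕ) (c : ℕ → ℝ) (hc : ∀ i ∈ Finset.Icc 1 n, 0 ≤ c i)
    (h : ∑ i ∈ Finset.Icc 1 n, (i : ℝ) * c i = (n : ℝ)) :
    ∑ i ∈ Finset.Icc 1 n, (c i * (Real.log n + 1) - c i * Real.log (c i)) ≤
      (n : ℝ) * (1 + Real.log ((3 + Real.sqrt 5) / 2)) := by
  rcases Nat.eq_zero_or_pos n with hn0 | hn0
  · subst hn0; simp
  set a : ℝ := (3 + Real.sqrt 5) / 2 with ha_def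
  have hs5 : (2:ℝ) ≤ Real.sqrt 5 := by
    nlinarith [Real.sq_sqrt (show (0:ℝ) ≤ 5 by norm_num), Real.sqrt_nonneg 5]
  have ha2 : (2:ℝ) ≤ a := by rw [ha_def]; linarith
  have ha0 : (0:ℝ) < a := by linarith
  have hla : 0 ≤ Real.log a := Real.log_nonneg (by linarith)
  have hn : (0:ℝ) < n := by exact_mod_cast hn0
  have key : ∀ i ∈ Finset.Icc 1 n,
      c i * (Real.log n + 1) - c i * Real.log (c i)
        ≤ (n:ℝ) * (1/a)^i + (i:ℝ) * c i * Real.log a := by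
    intro i hi
    rcases (hc i hi).eq_or_lt with hci | hci
    · rw [← hci]
      have : (0:ℝ) ≤ (n:ℝ) * (1/a)^i := by positivity
      simpa using this
    · have hai : (0:ℝ) < a ^ i := by positivity
      have hpos : (0:ℝ) < (n:ℝ) / (a ^ i * c i) := by positivity
      have hle : Real.log ((n:ℝ) / (a ^ i * c i)) ≤ (n:ℝ) / (a ^ i * c i) - 1 :=
        Real.log_le_sub_one_of_pos hpos
      have hlog : Real.log ((n:ℝ) / (a ^ i * c i))
          = Real.log n - ((i:ℝ) * Real.log a + Real.log (c i)) := by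
        rw [Real.log_div (ne_of_gt hn) (by positivity),
          Real.log_mul (by positivity) (ne_of_gt hci), Real.log_pow]
      have hmul : c i * Real.log ((n:ℝ) / (a ^ i * c i))
          ≤ c i * ((n:ℝ) / (a ^ i * c i) - 1) :=
        mul_le_mul_of_nonneg_left hle (le_of_lt hci)
      have hfr : c i * ((n:ℝ) / (a ^ i * c i)) = (n:ℝ) * (1/a)^i := by
        rw [one_div a, inv_pow]; field_simp
      rw [hlog] at hmul
      nlinarith [hmul, hfr]
  calc ∑ i ∈ Finset.Icc 1 n, (c i * (Real.log n + 1) - c i * Real.log (c i))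
      ≤ ∑ i ∈ Finset.Icc 1 n, ((n:ℝ) * (1/a)^i + (i:ℝ) * c i * Real.log a) :=
        Finset.sum_le_sum key
    _ = (n:ℝ) * ∑ i ∈ Finset.Icc 1 n, (1/a)^i
          + (∑ i ∈ Finset.Icc 1 n, (i:ℝ) * c i) * Real.log a := by
        rw [Finset.sum_add_distrib, Finset.mul_sum, Finset.sum_mul]
    _ ≤ (n:ℝ) * 1 + (n:ℝ) * Real.log a := by
        rw [h]
        have hgeo : ∑ i ∈ Finset.Icc 1 n, ((1:ℝ)/a)^i ≤ 1 := by
          calc ∑ i ∈ Finset.Icc 1 n, ((1:ℝ)/a)^i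
              ≤ ∑ i ∈ Finset.Icc 1 n, ((1:ℝ)/2)^i := by
                apply Finset.sum_le_sum
                intro i _
                exact pow_le_pow_left₀ (by positivity) (by
                  rw [div_le_div_iff₀ ha0 (by norm_num)]; linarith) i
            _ = 1 - (1/2)^n := geom_half_eq n
            _ ≤ 1 := by
                have : (0:ℝ) ≤ (1/2:ℝ)^n := by positivity
                linarith
        nlinarith [hgeo]
    _ = (n:ℝ) * (1 + Real.log a) := by ring
end
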